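/- Let E ⊆ Z^n be a d-sparse subset and M a paving matroid of rank d+1 on E, with hyperplane collection H(M). Then H(M) satisfies: Z^n is not in H(M); every H in H(M) has size >= d; and if H_1, H_2 in H(M) and u in Z^n satisfy |H_1 ∩ (u + H_2)| >= d, then u = 0 and H_1 = H_2. -/

import Mathlib

open Set Matroid

variable {n : ℕ}

/-- A circuit of a matroid: a minimal dependent set. -/
def Matroid.IsCircuit' {α : Type*} (M : Matroid α) (C : Set α) : Prop :=
  M.Dep C ∧ ∀ D, M.Dep D → D ⊆ C → D = C

/-- The rank of a matroid, as an extended natural number. -/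
noncomputable def Matroid.eRank' {α : Type*} (M : Matroid α) : ℕ∞ :=
  ⨆ B ∈ {B | M.IsBase B}, B.encard

/-- A hyperplane of a finite-rank matroid: a maximal subset of the ground set
of rank `rank M - 1`. -/
def Matroid.IsHyperplane {α : Type*} (M : Matroid α) (H : Set α) : Prop :=
  H ⊆ M.E ∧ (M ↾ H).eRank' + 1 = M.eRank' ∧
    ∀ H', H ⊂ H' → H' ⊆ M.E → (M ↾ H').eRank' + 1 ≠ M.eRank'

/-- The translate `u + S` of a subset `S ⊆ ℤⁿ`. -/
def ztranslate (u : Fin n → ℤ) (S : Set (Fin n → ℤ)) : Set (Fin n → ℤ) :=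
  (fun x => u + x) '' S

/-- A subset `S ⊆ ℤⁿ` is `d`-sparse if `|S ∩ (u + S)| < d` for every nonzero
`u ∈ ℤⁿ`. -/
def ZSparse (d : ℕ) (S : Set (Fin n → ℤ)) : Prop :=
  ∀ u : Fin n → ℤ, u ≠ 0 → (S ∩ ztranslate u S).encard < d

lemma Matroid.eRank_eq_of_base {α : Type*} {M : Matroid α} {B : Set α} (hB : M.IsBase B) :
    M.eRank' = B.encard := by
  apply le_antisymm
  · exact iSup₂_le fun B' hB' => (hB'.encard_eq_encard_of_isBase hB).le
  · exact le_iSup₂ (f := fun (B : Set α) (_ : B ∈ {B | M.IsBase B}) => B.encard) B hB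

lemma Matroid.dep_has_circuit {α : Type*} (M : Matroid α) :
    ∀ (k : ℕ) (X : Set α), X.Finite → X.ncard ≤ k → M.Dep X → ∃ C, C ⊆ X ∧ M.IsCircuit' C := by
  intro k
  induction k with
  | zero =>
    intro X hfin hcard hdep
    have : X = ∅ := by
      rw [← Set.ncard_eq_zero hfin]; omega
    exact absurd (this ▸ hdep).not_indep (by simp)
  | succ k ih =>
    intro X hfin hcard hdep
    by_cases hmin : ∀ D, M.Dep D → D ⊆ X → D = X
    · exact ⟨X, subset_rfl, hdep, hmin⟩
    · push_neg at hmin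
      obtain ⟨D, hD, hDX, hne⟩ := hmin
      have hss : D ⊂ X := hDX.ssubset_of_ne hne
      obtain ⟨C, hCD, hC⟩ := ih D (hfin.subset hDX)
        (by have := Set.ncard_lt_ncard hss hfin; omega) hD
      exact ⟨C, hCD.trans hDX, hC⟩

theorem hyperplanes_of_paving_on_sparse_set (d : ℕ) (E : Set (Fin n → ℤ))
    (hE : ZSparse d E) (M : Matroid (Fin n → ℤ)) (hME : M.E = E)
    (hrank : M.eRank' = d + 1)
    (hpaving : ∀ C, M.IsCircuit' C → C.encard = d + 1 ∨ C.encard = d + 2) :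
    (univ : Set (Fin n → ℤ)) ∉ {H | M.IsHyperplane H} ∧
    (∀ H, M.IsHyperplane H → (d : ℕ∞) ≤ H.encard) ∧
    (∀ H₁ H₂, M.IsHyperplane H₁ → M.IsHyperplane H₂ → ∀ u : Fin n → ℤ,
      (d : ℕ∞) ≤ (H₁ ∩ ztranslate u H₂).encard → u = 0 ∧ H₁ = H₂) := by
  -- every basis of a hyperplane has `d` elements
  have hbasis_card : ∀ H I, M.IsHyperplane H → M.IsBasis I H → I.encard = d := by
    intro H I hH hI
    have h1 : (M ↾ H).eRank' = I.encard := Matroid.eRank_eq_of_base hI.isBase_restrict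
    have h2 := hH.2.1
    rw [h1, hrank] at h2
    exact WithTop.add_right_cancel (by simp : (1 : ℕ∞) ≠ ⊤) h2
  refine ⟨?_, ?_, ?_⟩
  · -- univ is not a hyperplane
    intro h
    obtain ⟨hHE, hrk, -⟩ := h
    have hEeq : M.E = univ := univ_subset_iff.mp hHE
    rw [← hEeq, restrict_ground_eq_self, hrank] at hrk
    rw [show ((d:ℕ∞)+1)+1 = ((d+2:ℕ):ℕ∞) by push_cast; ring,
      show (d:ℕ∞)+1 = ((d+1:ℕ):ℕ∞) by push_cast; ring, Nat.cast_inj] at hrk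
    omega
  · -- every hyperplane has at least d elements
    intro H hH
    obtain ⟨I, hI⟩ := M.exists_isBasis H hH.1
    calc (d : ℕ∞) = I.encard := (hbasis_card H I hH hI).symm
      _ ≤ H.encard := encard_mono hI.subset
  · intro H₁ H₂ hH₁ hH₂ u hcard
    have hu : u = 0 := by
      by_contra hu
      have hsub : H₁ ∩ ztranslate u H₂ ⊆ E ∩ ztranslate u E :=
        inter_subset_inter (hME ▸ hH₁.1) (image_mono (hME ▸ hH₂.1))
      exact absurd (hcard.trans (encard_mono hsub)) (not_le.mpr (hE u hu))
    subst hu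
    have htr : ztranslate 0 H₂ = H₂ := by
      unfold ztranslate; simp
    rw [htr] at hcard
    refine ⟨rfl, ?_⟩
    -- pick a d-element subset X of H₁ ∩ H₂
    obtain ⟨X, hXsub, hXcard⟩ := Set.exists_subset_encard_eq hcard
    have hXfin : X.Finite := Set.finite_of_encard_eq_coe hXcard
    have hXn : X.ncard = d := by rw [Set.ncard_def, hXcard]; simp
    have hXE : X ⊆ M.E := (hXsub.trans inter_subset_left).trans hH₁.1
    -- X is independent
    have hXindep : M.Indep X := by
      by_contra hdep
      obtain ⟨C, hCX, hC⟩ := M.dep_has_circuit d X hXfin hXn.le ⟨hdep, hXE⟩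
      have hle : C.encard ≤ (d : ℕ∞) := hXcard ▸ encard_mono hCX
      rcases hpaving C hC with h | h <;> rw [h] at hle <;>
        · rw [show (d:ℕ∞)+1 = ((d+1:ℕ):ℕ∞) by push_cast; ring] at *
          rw [show (d:ℕ∞)+2 = ((d+2:ℕ):ℕ∞) by push_cast; ring] at *
          exact absurd (Nat.cast_le.mp hle) (by omega)
    -- every hyperplane containing X equals the closure of X
    have key : ∀ H, M.IsHyperplane H → X ⊆ H → H = M.closure X := by
      intro H hH hXH
      obtain ⟨I, hIbasis, hXI⟩ := hXindep.subset_isBasis_of_subset hXH hH.1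
      have hIcard : I.encard = d := hbasis_card H I hH hIbasis
      have hIfin : I.Finite := Set.finite_of_encard_eq_coe hIcard
      have hXeqI : X = I :=
        hIfin.eq_of_subset_of_encard_le' hXI (by rw [hIcard, hXcard])
      have hXbasis : M.IsBasis X H := hXeqI ▸ hIbasis
      apply subset_antisymm hXbasis.subset_closure
      intro y hy
      by_contra hyH
      have hy' : y ∈ M.E := M.closure_subset_ground X hy
      have hbasis' : M.IsBasis X (insert y H) :=
        hXindep.isBasis_of_subset_of_subset_closure (hXH.trans (subset_insert _ _))
          (insert_subset hy hXbasis.subset_closure)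
      refine hH.2.2 (insert y H) (ssubset_insert hyH) (insert_subset hy' hH.1) ?_
      rw [Matroid.eRank_eq_of_base hbasis'.isBase_restrict, hXcard, hrank]
    rw [key H₁ hH₁ (hXsub.trans inter_subset_left),
      key H₂ hH₂ (hXsub.trans inter_subset_right)]
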